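/- Let φ : [0,∞) → [0,∞) be an increasing, convex, non-constant function. Then limsup_{t→∞} ln(∫_t^∞ e^{-φ(r)} dr) / φ(t) ≥ -1. -/

import Mathlib

open MeasureTheory Filter Set

/-- Key combinatorial lemma: for a monotone function tending to infinity, for every `ε > 0`
there are arbitrarily large `s` with `φ (s + exp (-(ε * φ s))) ≤ (1+ε) * φ s`. -/
lemma stmt2_aux (φ : ℝ → ℝ) (hmono : MonotoneOn φ (Set.Ici 0))
    (hinf : Filter.Tendsto φ Filter.atTop Filter.atTop) {ε : ℝ} (hε : 0 < ε) (S : ℝ) :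
    ∃ s, S ≤ s ∧ 0 ≤ s ∧ 1 ≤ φ s ∧ φ (s + Real.exp (-(ε * φ s))) ≤ (1 + ε) * φ s := by
  by_contra hC
  push_neg at hC
  obtain ⟨S₀, hS₀⟩ : ∃ S₀, ∀ x ≥ S₀, 1 ≤ φ x := (hinf.eventually_ge_atTop 1).exists_forall_of_atTop
  set T : ℝ := max S₀ (max S 0) with hT
  have hTS₀ : S₀ ≤ T := le_max_left _ _
  have hTS : S ≤ T := le_trans (le_max_left _ _) (le_max_right _ _)
  have hT0 : (0:ℝ) ≤ T := le_trans (le_max_right _ _) (le_max_right _ _)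
  set r : ℝ := Real.exp (-(ε * ε)) with hrdef
  have hr0 : 0 < r := Real.exp_pos _
  have hr1 : r < 1 := Real.exp_lt_one_iff.2 (by nlinarith)
  set a : ℝ := Real.exp (-ε) / (1 - r) with hadef
  have ha0 : 0 < a := div_pos (Real.exp_pos _) (by linarith)
  have har : a * (1 - r) = Real.exp (-ε) := div_mul_cancel₀ _ (by linarith)
  -- the recursively defined sequence
  set s : ℕ → ℝ := fun n => Nat.rec T (fun _ x => x + Real.exp (-(ε * φ x))) n with hsdef
  have hstep : ∀ n, s (n + 1) = s n + Real.exp (-(ε * φ (s n))) := fun n => rfl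
  have key : ∀ n, T ≤ s n ∧ (1 + ε) ^ n ≤ φ (s n) ∧ s n + a * r ^ n ≤ T + a := by
    intro n
    induction n with
    | zero =>
      have h0 : s 0 = T := rfl
      refine ⟨by rw [h0], ?_, by rw [h0]; simp⟩
      rw [h0, pow_zero]
      exact hS₀ T hTS₀
    | succ n ih =>
      obtain ⟨h1, h2, h3⟩ := ih
      have hpow1 : (1:ℝ) ≤ (1 + ε) ^ n := one_le_pow₀ (by linarith)
      have hφ1 : 1 ≤ φ (s n) := le_trans hpow1 h2
      have hs0 : 0 ≤ s n := le_trans hT0 h1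
      have hlt := hC (s n) (le_trans hTS h1) hs0 hφ1
      have hexp_pos : 0 < Real.exp (-(ε * φ (s n))) := Real.exp_pos _
      refine ⟨by rw [hstep]; linarith, ?_, ?_⟩
      · have : (1 + ε) * (1 + ε) ^ n ≤ (1 + ε) * φ (s n) :=
          mul_le_mul_of_nonneg_left h2 (by linarith)
        calc (1 + ε) ^ (n + 1) = (1 + ε) * (1 + ε) ^ n := by ring
          _ ≤ (1 + ε) * φ (s n) := this
          _ ≤ φ (s n + Real.exp (-(ε * φ (s n)))) := hlt.le
          _ = φ (s (n + 1)) := by rw [hstep]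
      · -- bound the step
        have hbern : 1 + (n:ℝ) * ε ≤ (1 + ε) ^ n := one_add_mul_le_pow (by linarith) n
        have hφn : 1 + (n:ℝ) * ε ≤ φ (s n) := le_trans hbern h2
        have hexp_le : Real.exp (-(ε * φ (s n))) ≤ Real.exp (-ε) * r ^ n := by
          rw [hrdef, ← Real.exp_nat_mul, ← Real.exp_add]
          apply Real.exp_le_exp.2
          nlinarith
        have hrn : (0:ℝ) ≤ r ^ n := (pow_pos hr0 n).le
        have : s (n + 1) + a * r ^ (n + 1) ≤ s n + a * r ^ n := by
          rw [hstep]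
          have : Real.exp (-ε) * r ^ n + a * r ^ (n + 1) = a * r ^ n := by
            rw [← har]; ring
          nlinarith
        linarith
  obtain ⟨n, hn⟩ := pow_unbounded_of_one_lt (φ (T + a)) (by linarith : (1:ℝ) < 1 + ε)
  obtain ⟨h1, h2, h3⟩ := key n
  have hsn : s n ≤ T + a := by nlinarith [(pow_pos hr0 n).le]
  have hφle : φ (s n) ≤ φ (T + a) :=
    hmono (le_trans hT0 h1) (by linarith : (0:ℝ) ≤ T + a) hsn
  linarith

theorem stmt2 (φ : ℝ → ℝ)
    (hmono : MonotoneOn φ (Set.Ici 0))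
    (hconv : ConvexOn ℝ (Set.Ici 0) φ)
    (hnonneg : ∀ t ∈ Set.Ici (0 : ℝ), 0 ≤ φ t)
    (hnc : ∃ s t : ℝ, 0 ≤ s ∧ 0 ≤ t ∧ φ s ≠ φ t) :
    -1 ≤ Filter.limsup
      (fun t => Real.log (∫ r in Set.Ioi t, Real.exp (-φ r)) / φ t)
      Filter.atTop := by
  classical
  -- extract two points with different values
  obtain ⟨u, v, hu0, hv0, m, huv, hm, hlin⟩ :
      ∃ u v : ℝ, 0 ≤ u ∧ 0 ≤ v ∧ ∃ m : ℝ, u < v ∧ 0 < m ∧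
        ∀ r, v ≤ r → φ u + m * (r - u) ≤ φ r := by
    obtain ⟨aa, bb, haa, hbb, hne⟩ := hnc
    obtain ⟨u, v, hu0, hv0, huv, hval⟩ : ∃ u v : ℝ, 0 ≤ u ∧ 0 ≤ v ∧ u < v ∧ φ u < φ v := by
      rcases lt_trichotomy aa bb with h | h | h
      · exact ⟨aa, bb, haa, hbb, h, lt_of_le_of_ne (hmono haa hbb h.le) hne⟩
      · exact absurd (congrArg φ h) hne
      · exact ⟨bb, aa, hbb, haa, h, lt_of_le_of_ne (hmono hbb haa h.le) (Ne.symm hne)⟩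
    refine ⟨u, v, hu0, hv0, (φ v - φ u) / (v - u), huv,
      div_pos (by linarith) (by linarith), ?_⟩
    intro r hr
    rcases eq_or_lt_of_le hr with h | h
    · rw [← h]; rw [div_mul_eq_mul_div, mul_div_assoc, div_self (by linarith), mul_one]; linarith
    · have hslope := hconv.slope_mono_adjacent (mem_Ici.2 hu0)
        (mem_Ici.2 (by linarith : (0:ℝ) ≤ r)) huv h
      rw [div_le_div_iff₀ (by linarith) (by linarith)] at hslope
      have h2 : (φ v - φ u) / (v - u) * (r - u) ≤ φ r - φ u := by
        rw [div_mul_eq_mul_div, div_le_iff₀ (by linarith : (0:ℝ) < v - u)]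
        nlinarith
      linarith
  -- φ tends to infinity
  have hinf : Filter.Tendsto φ Filter.atTop Filter.atTop := by
    have hsub : Filter.Tendsto (fun r : ℝ => r - u) Filter.atTop Filter.atTop := by
      simpa [sub_eq_add_neg] using
        Filter.tendsto_atTop_add_const_right Filter.atTop (-u) Filter.tendsto_id
    have hlintend : Filter.Tendsto (fun r : ℝ => φ u + m * (r - u))
        Filter.atTop Filter.atTop :=
      Filter.tendsto_atTop_add_const_left _ _ (hsub.const_mul_atTop hm)
    exact Filter.tendsto_atTop_mono' Filter.atTop
      (by filter_upwards [Filter.eventually_ge_atTop v] with r hr using hlin r hr) hlintend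
  -- integrability
  have hmeas : ∀ t : ℝ, 0 ≤ t →
      AEMeasurable (fun r => Real.exp (-φ r)) (volume.restrict (Set.Ioi t)) := by
    intro t ht
    have : AEMeasurable φ (volume.restrict (Set.Ioi t)) :=
      aemeasurable_restrict_of_monotoneOn measurableSet_Ioi
        (hmono.mono (fun x hx => le_of_lt (lt_of_le_of_lt ht hx)))
    exact Real.continuous_exp.measurable.comp_aemeasurable this.neg
  have hint : ∀ t : ℝ, 0 ≤ t → IntegrableOn (fun r => Real.exp (-φ r)) (Set.Ioi t) := by
    intro t ht
    set V : ℝ := max t v with hV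
    have htV : t ≤ V := le_max_left _ _
    have hvV : v ≤ V := le_max_right _ _
    have hsplit : Set.Ioi t = Set.Ioc t V ∪ Set.Ioi V := (Set.Ioc_union_Ioi_eq_Ioi htV).symm
    rw [hsplit]
    apply IntegrableOn.union
    · -- bounded on a finite-measure set
      refine ⟨((hmeas t ht).mono_measure
          (Measure.restrict_mono Set.Ioc_subset_Ioi_self le_rfl)).aestronglyMeasurable,
        HasFiniteIntegral.restrict_of_bounded (C := 1) measure_Ioc_lt_top ?_⟩
      filter_upwards [ae_restrict_mem measurableSet_Ioc] with x hx
      rw [Real.norm_eq_abs, abs_of_pos (Real.exp_pos _)]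
      calc Real.exp (-φ x) ≤ Real.exp 0 :=
          Real.exp_le_exp.2 (neg_nonpos.2 (hnonneg x (le_of_lt (lt_of_le_of_lt ht hx.1))))
        _ = 1 := Real.exp_zero
    · -- dominated by an exponential
      have hdom : IntegrableOn
          (fun x => Real.exp (-φ u + m * u) * Real.exp (-m * x)) (Set.Ioi V) :=
        (exp_neg_integrableOn_Ioi V hm).const_mul _
      apply Integrable.mono hdom
      · exact ((hmeas t ht).mono_measure
          (Measure.restrict_mono (Set.Ioi_subset_Ioi htV) le_rfl)).aestronglyMeasurable
      · filter_upwards [ae_restrict_mem measurableSet_Ioi] with x hx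
        rw [Real.norm_eq_abs, Real.norm_eq_abs, abs_of_pos (Real.exp_pos _),
          abs_of_pos (by positivity)]
        rw [← Real.exp_add]
        apply Real.exp_le_exp.2
        have := hlin x (le_trans hvV hx.le)
        linarith
  -- boundedness above of the ratio
  have hbdd : Filter.IsBoundedUnder (· ≤ ·) Filter.atTop
      (fun t => Real.log (∫ r in Set.Ioi t, Real.exp (-φ r)) / φ t) := by
    set K : ℝ := Real.log (∫ r in Set.Ioi v, Real.exp (-φ r)) with hK
    obtain ⟨T₁, hT₁⟩ : ∃ T₁, ∀ x ≥ T₁, 1 ≤ φ x :=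
      (hinf.eventually_ge_atTop 1).exists_forall_of_atTop
    apply Filter.isBoundedUnder_of_eventually_le (a := max K 0)
    filter_upwards [Filter.eventually_ge_atTop (max v T₁)] with t ht
    have htv : v ≤ t := le_trans (le_max_left _ _) ht
    have hφt : 1 ≤ φ t := hT₁ t (le_trans (le_max_right _ _) ht)
    set I : ℝ := ∫ r in Set.Ioi t, Real.exp (-φ r) with hI
    have hI0 : 0 ≤ I := setIntegral_nonneg measurableSet_Ioi (fun x _ => (Real.exp_pos _).le)
    have hIle : I ≤ ∫ r in Set.Ioi v, Real.exp (-φ r) := by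
      apply setIntegral_mono_set (hint v hv0)
      · filter_upwards with x using (Real.exp_pos _).le
      · exact Filter.Eventually.of_forall (Set.Ioi_subset_Ioi htv)
    rcases le_or_gt I 1 with h1 | h1
    · have : Real.log I ≤ 0 := Real.log_nonpos hI0 h1
      have : Real.log I / φ t ≤ 0 := div_nonpos_iff.mpr (Or.inr ⟨this, by linarith⟩)
      exact le_trans this (le_max_right _ _)
    · have hlogK : Real.log I ≤ K := Real.log_le_log (by linarith) hIle
      have hlog0 : 0 ≤ Real.log I := Real.log_nonneg h1.le
      have : Real.log I / φ t ≤ Real.log I := div_le_self hlog0 hφt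
      exact le_trans (le_trans this hlogK) (le_max_left _ _)
  -- main estimate
  have H : ∀ ε : ℝ, 0 < ε → -(1 + 2 * ε) ≤ Filter.limsup
      (fun t => Real.log (∫ r in Set.Ioi t, Real.exp (-φ r)) / φ t) Filter.atTop := by
    intro ε hε
    apply Filter.le_limsup_of_frequently_le _ hbdd
    rw [Filter.frequently_atTop]
    intro S
    obtain ⟨s, hsS, hs0, hφs1, hφs⟩ := stmt2_aux φ hmono hinf hε (max S 0)
    refine ⟨s, le_trans (le_max_left _ _) hsS, ?_⟩
    set δ : ℝ := Real.exp (-(ε * φ s)) with hδ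
    have hδ0 : 0 < δ := Real.exp_pos _
    set I : ℝ := ∫ r in Set.Ioi s, Real.exp (-φ r) with hI
    have hlow : δ * Real.exp (-φ (s + δ)) ≤ I := by
      have hconst : Real.exp (-φ (s + δ)) * (volume (Set.Ioo s (s + δ))).toReal ≤
          ∫ r in Set.Ioo s (s + δ), Real.exp (-φ r) := by
        apply setIntegral_ge_of_const_le_real measurableSet_Ioo measure_Ioo_lt_top.ne
        · intro x hx
          apply Real.exp_le_exp.2
          apply neg_le_neg
          exact hmono (le_of_lt (lt_of_le_of_lt hs0 hx.1)) (by simp only [Set.mem_Ici]; nlinarith [hx.2, hδ0]) hx.2.le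
        · exact (hint s hs0).mono_set Set.Ioo_subset_Ioi_self
      have hvol : (volume (Set.Ioo s (s + δ))).toReal = δ := by
        rw [Real.volume_Ioo]
        simp [ENNReal.toReal_ofReal hδ0.le]
      have hsub : ∫ r in Set.Ioo s (s + δ), Real.exp (-φ r) ≤ I := by
        apply setIntegral_mono_set (hint s hs0)
        · filter_upwards with x using (Real.exp_pos _).le
        · exact Filter.Eventually.of_forall Set.Ioo_subset_Ioi_self
      calc δ * Real.exp (-φ (s + δ)) = Real.exp (-φ (s + δ)) * δ := mul_comm _ _
        _ = Real.exp (-φ (s + δ)) * (volume (Set.Ioo s (s + δ))).toReal := by rw [hvol]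
        _ ≤ ∫ r in Set.Ioo s (s + δ), Real.exp (-φ r) := hconst
        _ ≤ I := hsub
    have hpos : 0 < δ * Real.exp (-φ (s + δ)) := by positivity
    have hlog : -(1 + 2 * ε) * φ s ≤ Real.log I := by
      have h1 : Real.log (δ * Real.exp (-φ (s + δ))) ≤ Real.log I :=
        Real.log_le_log hpos hlow
      have h2 : Real.log (δ * Real.exp (-φ (s + δ))) = -(ε * φ s) + -φ (s + δ) := by
        rw [Real.log_mul (ne_of_gt hδ0) (ne_of_gt (Real.exp_pos _)), hδ,
          Real.log_exp, Real.log_exp]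
      rw [h2] at h1
      nlinarith
    show -(1 + 2 * ε) ≤ Real.log I / φ s
    rw [le_div_iff₀ (by linarith : (0:ℝ) < φ s)]
    exact hlog
  -- conclude
  by_contra hL
  push_neg at hL
  have h2 := H ((-1 - Filter.limsup
      (fun t => Real.log (∫ r in Set.Ioi t, Real.exp (-φ r)) / φ t) Filter.atTop) / 4)
    (by linarith)
  linarith
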